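/- (Finite-time zeroing comparison lemma.) Let z : ℝ → ℝ be differentiable, let t₀ ∈ ℝ and c > 0, and suppose that for every t ≥ t₀: if z(t) > 0 then z′(t) ≤ −c, and if z(t) < 0 then z′(t) ≥ c. Then z(t) = 0 for every t ≥ t₀ + |z(t₀)|/c. -/

import Mathlib

lemma stmt_13_aux (z : ℝ → ℝ) (hz : Differentiable ℝ z) (t₀ c : ℝ) (hc : 0 < c)
    (hpos : ∀ t, t₀ ≤ t → 0 < z t → deriv z t ≤ -c) :
    ∀ t, t₀ + |z t₀| / c ≤ t → z t ≤ 0 := by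
  intro t ht
  by_contra h
  push_neg at h
  have habs : 0 ≤ |z t₀| / c := div_nonneg (abs_nonneg _) hc.le
  have ht0 : t₀ ≤ t := by linarith
  set S : Set ℝ := Set.Icc t₀ t ∩ z ⁻¹' Set.Iic 0 with hS
  have hScomp : IsCompact S :=
    isCompact_Icc.inter_right (isClosed_Iic.preimage hz.continuous)
  by_cases hne : S.Nonempty
  · obtain ⟨u, huS, hmax⟩ := hScomp.exists_isGreatest hne
    obtain ⟨⟨hu0, hut⟩, huz⟩ := huS
    have huz' : z u ≤ 0 := huz
    have hult : u < t := lt_of_le_of_ne hut (by rintro rfl; linarith)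
    obtain ⟨r, hr, hslope⟩ := exists_deriv_eq_slope z hult
      (hz.continuous.continuousOn) (fun x _ => (hz x).differentiableWithinAt)
    have hrpos : 0 < z r := by
      by_contra hzr
      push_neg at hzr
      have : r ∈ S := ⟨⟨le_trans hu0 hr.1.le, hr.2.le⟩, hzr⟩
      exact absurd (hmax this) (not_le.mpr hr.1)
    have hderiv : deriv z r ≤ -c := hpos r (le_trans hu0 hr.1.le) hrpos
    rw [hslope] at hderiv
    have htu : 0 < t - u := by linarith
    have := (div_le_iff₀ htu).mp hderiv
    nlinarith
  · have hzall : ∀ u ∈ Set.Icc t₀ t, 0 < z u := by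
      intro u hu
      by_contra hzu
      push_neg at hzu
      exact hne ⟨u, hu, hzu⟩
    have hz0 : 0 < z t₀ := hzall t₀ ⟨le_refl _, ht0⟩
    have habs' : |z t₀| = z t₀ := abs_of_pos hz0
    have hlt : t₀ < t := by
      have : 0 < |z t₀| / c := div_pos (by rw [habs']; exact hz0) hc
      linarith
    obtain ⟨r, hr, hslope⟩ := exists_deriv_eq_slope z hlt
      (hz.continuous.continuousOn) (fun x _ => (hz x).differentiableWithinAt)
    have hderiv : deriv z r ≤ -c := hpos r hr.1.le (hzall r ⟨hr.1.le, hr.2.le⟩)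
    rw [hslope] at hderiv
    have htu : 0 < t - t₀ := by linarith
    have h1 := (div_le_iff₀ htu).mp hderiv
    have h2 : |z t₀| ≤ (t - t₀) * c :=
      (div_le_iff₀ hc).mp (by linarith : |z t₀| / c ≤ t - t₀)
    rw [habs'] at h2
    linarith

/-- Finite-time zeroing comparison lemma: if `z` is
differentiable, `c > 0`, and for every `t ≥ t₀` we have `z′(t) ≤ −c` whenever
`z(t) > 0` and `z′(t) ≥ c` whenever `z(t) < 0`, then `z(t) = 0` for every
`t ≥ t₀ + |z(t₀)|/c`. -/
theorem stmt_13 (z : ℝ → ℝ) (hz : Differentiable ℝ z) (t₀ c : ℝ) (hc : 0 < c)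
    (hpos : ∀ t, t₀ ≤ t → 0 < z t → deriv z t ≤ -c)
    (hneg : ∀ t, t₀ ≤ t → z t < 0 → c ≤ deriv z t) :
    ∀ t, t₀ + |z t₀| / c ≤ t → z t = 0 := by
  intro t ht
  have h1 : z t ≤ 0 := stmt_13_aux z hz t₀ c hc hpos t ht
  have h2 : (-z) t ≤ 0 := by
    apply stmt_13_aux (-z) hz.neg t₀ c hc _ t
    · simpa using ht
    · intro s hs hzs
      have : z s < 0 := by simpa using hzs
      have := hneg s hs this
      have hd : deriv (-z) s = -deriv z s := by
        rw [show (-z) = fun y => -z y from rfl, deriv.fun_neg]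
      rw [hd]; linarith
  simp only [Pi.neg_apply] at h2
  linarith
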